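/- Let A ∈ ℝ^{m×n}, V ∈ ℝ^{m×l₁} with orthonormal columns, and Ω₂ ∈ ℝ^{l₂×m} with l₂ ≥ l₁ such that Ω₂V has full column rank. Then with B = (Ω₂V)† Ω₂ A, we have ‖A − VB‖₂ ≤ (1 + ‖V(Ω₂V)†Ω₂‖₂) · ‖A − VVᵀA‖₂. -/

import Mathlib

open Matrix BigOperators

theorem Matrix.isHermitian_transpose_mul_self {m n α : Type*} [Fintype m] [CommSemiring α]
    [StarRing α] [TrivialStar α] (A : Matrix m n α) : (Aᵀ * A).IsHermitian := by
  simpa [conjTranspose_eq_transpose_of_trivial] using isHermitian_conjTranspose_mul_self A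

noncomputable def singularValue {m n : ℕ} (A : Matrix (Fin m) (Fin n) ℝ) : Fin n → ℝ :=
  fun j =>
    Real.sqrt ((Matrix.isHermitian_transpose_mul_self A).eigenvalues
      (Tuple.sort (fun i => -(Matrix.isHermitian_transpose_mul_self A).eigenvalues i) j))

noncomputable def matSpectralNorm {m n : ℕ} (A : Matrix (Fin m) (Fin n) ℝ) : ℝ :=
  ‖LinearMap.toContinuousLinearMap (Matrix.toEuclideanLin A)‖

noncomputable def frobNorm {m n : ℕ} (A : Matrix (Fin m) (Fin n) ℝ) : ℝ :=
  Real.sqrt (∑ i, ∑ j, (A i j)^2)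

noncomputable def pinv {a b : ℕ} (W : Matrix (Fin a) (Fin b) ℝ) : Matrix (Fin b) (Fin a) ℝ :=
  if a ≤ b then Wᵀ * (W * Wᵀ)⁻¹ else (Wᵀ * W)⁻¹ * Wᵀ

lemma sn_nonneg {m n : ℕ} (A : Matrix (Fin m) (Fin n) ℝ) : 0 ≤ matSpectralNorm A :=
  norm_nonneg _

lemma sn_sub_le {m n : ℕ} (X Y : Matrix (Fin m) (Fin n) ℝ) :
    matSpectralNorm (X - Y) ≤ matSpectralNorm X + matSpectralNorm Y := by
  unfold matSpectralNorm
  rw [map_sub, map_sub]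
  exact norm_sub_le _ _

lemma sn_mul_le {m k n : ℕ} (P : Matrix (Fin m) (Fin k) ℝ) (M : Matrix (Fin k) (Fin n) ℝ) :
    matSpectralNorm (P * M) ≤ matSpectralNorm P * matSpectralNorm M := by
  unfold matSpectralNorm
  have h : LinearMap.toContinuousLinearMap (Matrix.toEuclideanLin (P * M)) =
      (LinearMap.toContinuousLinearMap (Matrix.toEuclideanLin P)).comp
        (LinearMap.toContinuousLinearMap (Matrix.toEuclideanLin M)) := by
    ext v
    simp [Matrix.toEuclideanLin_apply, Matrix.mulVec_mulVec]
  rw [h]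
  exact ContinuousLinearMap.opNorm_comp_le _ _

lemma rank_eq_isUnit {k : ℕ} (M : Matrix (Fin k) (Fin k) ℝ) (h : M.rank = k) : IsUnit M := by
  rw [← Matrix.mulVec_surjective_iff_isUnit]
  rw [Matrix.rank] at h
  have : LinearMap.range M.mulVecLin = ⊤ := by
    apply Submodule.eq_top_of_finrank_eq
    simp [h]
  exact LinearMap.range_eq_top.mp this

lemma pinv_mul_self {l₁ l₂ : ℕ} (W : Matrix (Fin l₂) (Fin l₁) ℝ) (hl : l₁ ≤ l₂)
    (hrank : W.rank = l₁) : pinv W * W = 1 := by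
  have hWtW : IsUnit (Wᵀ * W) := by
    apply rank_eq_isUnit
    rw [Matrix.rank_transpose_mul_self, hrank]
  have h1 : (Wᵀ * W)⁻¹ * (Wᵀ * W) = 1 :=
    Matrix.nonsing_inv_mul _ (Matrix.isUnit_iff_isUnit_det _ |>.mp hWtW)
  unfold pinv
  by_cases hc : l₂ ≤ l₁
  · rw [if_pos hc]
    have hWWt : IsUnit (W * Wᵀ) := by
      apply rank_eq_isUnit
      rw [Matrix.rank_self_mul_transpose, hrank]
      exact le_antisymm hl hc
    have h2 : (W * Wᵀ) * (W * Wᵀ)⁻¹ = 1 :=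
      Matrix.mul_nonsing_inv _ (Matrix.isUnit_iff_isUnit_det _ |>.mp hWWt)
    have : Wᵀ * (W * Wᵀ)⁻¹ * W = ((Wᵀ * W)⁻¹ * (Wᵀ * W)) * (Wᵀ * (W * Wᵀ)⁻¹ * W) := by
      rw [h1, one_mul]
    rw [this]
    calc ((Wᵀ * W)⁻¹ * (Wᵀ * W)) * (Wᵀ * (W * Wᵀ)⁻¹ * W)
        = (Wᵀ * W)⁻¹ * (Wᵀ * ((W * Wᵀ) * (W * Wᵀ)⁻¹) * W) := by
          simp only [Matrix.mul_assoc]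
      _ = (Wᵀ * W)⁻¹ * (Wᵀ * W) := by rw [h2, Matrix.mul_one]
      _ = 1 := h1
  · rw [if_neg hc]
    calc (Wᵀ * W)⁻¹ * Wᵀ * W = (Wᵀ * W)⁻¹ * (Wᵀ * W) := by rw [Matrix.mul_assoc]
      _ = 1 := h1

/-- Single-pass error bound in the spectral norm:
‖A − VB‖₂ ≤ (1 + ‖V(Ω₂V)†Ω₂‖₂)·‖A − VVᵀA‖₂ with B = (Ω₂V)†Ω₂A. -/
theorem single_pass_spectral_bound {m n l₁ l₂ : ℕ} (A : Matrix (Fin m) (Fin n) ℝ)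
    (V : Matrix (Fin m) (Fin l₁) ℝ) (hV : Vᵀ * V = 1)
    (Ω₂ : Matrix (Fin l₂) (Fin m) ℝ) (hl : l₁ ≤ l₂)
    (hrank : (Ω₂ * V).rank = l₁)
    (B : Matrix (Fin l₁) (Fin n) ℝ) (hB : B = pinv (Ω₂ * V) * (Ω₂ * A)) :
    matSpectralNorm (A - V * B) ≤
      (1 + matSpectralNorm (V * pinv (Ω₂ * V) * Ω₂)) * matSpectralNorm (A - V * (Vᵀ * A)) := by
  set W := Ω₂ * V with hW
  set P := V * pinv W * Ω₂ with hP
  have hPW : pinv W * W = 1 := pinv_mul_self W hl hrank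
  have e1 : P * (V * (Vᵀ * A)) = V * (Vᵀ * A) := by
    calc P * (V * (Vᵀ * A)) = V * (pinv W * (Ω₂ * V)) * (Vᵀ * A) := by
          rw [hP]; simp only [Matrix.mul_assoc]
      _ = V * (Vᵀ * A) := by rw [← hW, hPW, Matrix.mul_one]
  have key : A - V * B = (A - V * (Vᵀ * A)) - P * (A - V * (Vᵀ * A)) := by
    rw [hB, Matrix.mul_sub, e1, sub_sub_sub_cancel_right, hP]
    simp only [Matrix.mul_assoc]
  rw [key]
  have h1 := sn_sub_le (A - V * (Vᵀ * A)) (P * (A - V * (Vᵀ * A)))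
  have h2 := sn_mul_le P (A - V * (Vᵀ * A))
  have h3 := sn_nonneg (A - V * (Vᵀ * A))
  nlinarith
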